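/- Let F be a field and P ∈ F[X₁,…,Xₙ] a polynomial such that P(u) = 0 for every u ∈ {0,1}ⁿ with u ≠ (0,…,0), and P(0,…,0) ≠ 0. Then the total degree of P is at least n. -/
import Mathlib

theorem alon_furedi {F : Type*} [Field F] {n : ℕ}
    (P : MvPolynomial (Fin n) F)
    (hvanish : ∀ u : Fin n → F, (∀ i, u i = 0 ∨ u i = 1) → u ≠ 0 →
      MvPolynomial.eval u P = 0)
    (horigin : MvPolynomial.eval (0 : Fin n → F) P ≠ 0) :
    n ≤ P.totalDegree := by
  by_contra hlt
  push_neg at hlt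
  set v : (Fin n → Bool) → (Fin n → F) := fun u i => if u i then 1 else 0 with hv
  set S : F := ∑ u : Fin n → Bool,
      (∏ i, (-1 : F) ^ (if u i then 1 else 0)) * MvPolynomial.eval (v u) P with hS
  have S0 : S = MvPolynomial.eval (0 : Fin n → F) P := by
    rw [hS, Finset.sum_eq_single (fun _ => false)]
    · have hv0 : v (fun _ => false) = 0 := by funext i; simp [v]
      simp [hv0]
    · intro u _ hu
      have h1 : ∀ i, v u i = 0 ∨ v u i = 1 := by
        intro i; by_cases h : u i <;> simp [v, h]
      have h2 : v u ≠ 0 := by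
        obtain ⟨i, hi⟩ : ∃ i, u i = true := by
          by_contra h; push_neg at h
          exact hu (funext fun i => by simpa using h i)
        intro h0
        have := congrFun h0 i
        simp [v, hi] at this
      rw [hvanish (v u) h1 h2, mul_zero]
    · simp
  have S1 : S = 0 := by
    have expand : ∀ u : Fin n → Bool,
        (∏ i, (-1 : F) ^ (if u i then 1 else 0)) * MvPolynomial.eval (v u) P
          = ∑ d ∈ P.support, P.coeff d *
              ∏ i, ((-1 : F) ^ (if u i then 1 else 0) * (v u i) ^ d i) := by
      intro u
      rw [MvPolynomial.eval_eq', Finset.mul_sum]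
      refine Finset.sum_congr rfl fun d _ => ?_
      rw [Finset.prod_mul_distrib]; ring
    rw [hS]
    simp_rw [expand]
    rw [Finset.sum_comm]
    refine Finset.sum_eq_zero fun d hd => ?_
    obtain ⟨i0, hi0⟩ : ∃ i, d i = 0 := by
      by_contra h; push_neg at h
      have h1 : ∀ i, 1 ≤ d i := fun i => Nat.one_le_iff_ne_zero.2 (h i)
      have : n ≤ ∑ i, d i := by
        calc n = ∑ _i : Fin n, 1 := by simp
        _ ≤ ∑ i, d i := Finset.sum_le_sum fun i _ => h1 i
      have h2 : (d.sum fun _ e => e) ≤ P.totalDegree := MvPolynomial.le_totalDegree hd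
      rw [Finsupp.sum_fintype _ _ (fun _ => rfl)] at h2
      omega
    rw [← Finset.mul_sum]
    have : (∑ u : Fin n → Bool,
        ∏ i, ((-1 : F) ^ (if u i then 1 else 0) * (v u i) ^ d i)) = 0 := by
      simp only [hv]
      rw [← Fintype.prod_sum (fun (i : Fin n) (b : Bool) => (-1 : F) ^ (if b = true then 1 else 0)
          * (if b = true then (1:F) else 0) ^ d i)]
      refine Finset.prod_eq_zero (Finset.mem_univ i0) ?_
      simp [hi0]
    rw [this, mul_zero]
  rw [S0] at S1
  exact horigin S1
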